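/- For the L_p penalty with 0 < p < 1, i.e. p_λ(t) = λt^p, the function t ↦ t + p_λ'(t) = t + λp·t^{p−1} on (0,∞) attains a strictly positive minimum at a strictly positive point; in particular argmin_{t>0}{t + p_λ'(t)} ≠ 0, so the L_p penalized least squares estimator fails the continuity condition. -/

import Mathlib

/-- For the Lp penalty with `0 < p < 1`, the map `t ↦ t + λ p t^(p-1)` on
`(0,∞)` attains a strictly positive minimum at a strictly positive point;
hence its argmin over `t > 0` is not `0` (failure of continuity condition). -/
theorem stmt7 (p lam : ℝ) (hp0 : 0 < p) (hp1 : p < 1) (hlam : 0 < lam) :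
    ∃ t0 : ℝ, 0 < t0 ∧
      (∀ t : ℝ, 0 < t → t0 + lam * p * t0 ^ (p - 1) ≤ t + lam * p * t ^ (p - 1)) ∧
      0 < t0 + lam * p * t0 ^ (p - 1) := by
  set c : ℝ := lam * p with hc_def
  have hc : 0 < c := mul_pos hlam hp0
  have h1p : 0 < 1 - p := by linarith
  have hb : 0 < c * (1 - p) := mul_pos hc h1p
  have h2p : (0:ℝ) < 2 - p := by linarith
  set t0 : ℝ := (c * (1 - p)) ^ ((2 - p)⁻¹) with ht0_def
  have ht0 : 0 < t0 := Real.rpow_pos_of_pos hb _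
  have hkey : t0 ^ (p - 2) = (c * (1 - p))⁻¹ := by
    rw [ht0_def, ← Real.rpow_mul hb.le]
    have : (2 - p)⁻¹ * (p - 2) = -1 := by
      field_simp
      ring
    rw [this, Real.rpow_neg_one]
  set f : ℝ → ℝ := fun t => t + c * t ^ (p - 1) with hf_def
  -- derivative
  have hderiv : ∀ t : ℝ, 0 < t →
      HasDerivAt f (1 + c * ((p - 1) * t ^ (p - 2))) t := by
    intro t ht
    have h1 : HasDerivAt (fun t : ℝ => t ^ (p - 1)) ((p - 1) * t ^ (p - 1 - 1)) t :=
      Real.hasDerivAt_rpow_const (Or.inl ht.ne')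
    have h2 : p - 1 - 1 = p - 2 := by ring
    rw [h2] at h1
    exact (hasDerivAt_id t).add ((h1.const_mul c))
  -- sign of derivative
  have hsign_pos : ∀ t : ℝ, t0 < t → 0 < 1 + c * ((p - 1) * t ^ (p - 2)) := by
    intro t ht
    have hrp : t ^ (p - 2) < t0 ^ (p - 2) :=
      Real.rpow_lt_rpow_of_neg ht0 ht (by linarith)
    rw [hkey] at hrp
    have h3 : c * (1 - p) * t ^ (p - 2) < 1 := by
      have := mul_lt_mul_of_pos_left hrp hb
      rwa [mul_inv_cancel₀ hb.ne'] at this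
    nlinarith [Real.rpow_pos_of_pos (ht0.trans ht) (p - 2)]
  have hsign_neg : ∀ t : ℝ, 0 < t → t < t0 → 1 + c * ((p - 1) * t ^ (p - 2)) < 0 := by
    intro t ht htt
    have hrp : t0 ^ (p - 2) < t ^ (p - 2) :=
      Real.rpow_lt_rpow_of_neg ht htt (by linarith)
    rw [hkey] at hrp
    have h3 : 1 < c * (1 - p) * t ^ (p - 2) := by
      have := mul_lt_mul_of_pos_left hrp hb
      rwa [mul_inv_cancel₀ hb.ne'] at this
    nlinarith
  -- continuity on (0, ∞) pieces
  have hcont : ∀ t : ℝ, 0 < t → ContinuousAt f t := by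
    intro t ht
    exact (continuousAt_id).add
      ((Real.continuousAt_rpow_const t (p - 1) (Or.inl ht.ne')).const_smul c)
  have hmono : StrictMonoOn f (Set.Ici t0) := by
    apply strictMonoOn_of_deriv_pos (convex_Ici t0)
    · exact fun t ht => (hcont t (lt_of_lt_of_le ht0 ht)).continuousWithinAt
    · intro t ht
      rw [interior_Ici] at ht
      rw [(hderiv t (ht0.trans ht)).deriv]
      exact hsign_pos t ht
  have hanti : StrictAntiOn f (Set.Ioc 0 t0) := by
    apply strictAntiOn_of_deriv_neg (convex_Ioc 0 t0)
    · exact fun t ht => (hcont t ht.1).continuousWithinAt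
    · intro t ht
      rw [interior_Ioc] at ht
      rw [(hderiv t ht.1).deriv]
      exact hsign_neg t ht.1 ht.2
  refine ⟨t0, ht0, ?_, ?_⟩
  · intro t ht
    show f t0 ≤ f t
    rcases lt_trichotomy t t0 with h | h | h
    · exact (hanti ⟨ht, h.le⟩ ⟨ht0, le_refl t0⟩ h).le
    · rw [h]
    · exact (hmono (Set.mem_Ici.mpr le_rfl) h.le h).le
  · have : 0 < c * t0 ^ (p - 1) := mul_pos hc (Real.rpow_pos_of_pos ht0 _)
    linarith
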